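/- arXiv:2605.20718 — 4 statements merged into one kernel-verified Lean document; each statement's English description precedes it below -/
import Mathlib

section
/- Let d, m be positive integers, let A, D be real d×d matrices, B, F real d×m matrices, Q a real symmetric d×d matrix, N a real symmetric positive definite m×m matrix, I a real m×d matrix, and β ∈ ℝ. Set A_β := A − (β/2)·Id. Let K be a real symmetric positive definite d×d matrix, set S := N + Fᵀ K F, U := I + Bᵀ K + Fᵀ K D, and Θ := −S⁻¹ U (note S is symmetric positive definite, hence invertible). Assume Q − Iᵀ N⁻¹ I is positive definite and K satisfies 0 = Q + K A_β + A_βᵀ K + Dᵀ K D − Uᵀ S⁻¹ U. Then there exists κ > 0 such that (A + BΘ)ᵀ K + K (A + BΘ) + (D + FΘ)ᵀ K (D + FΘ) ⪯ (β − 2κ) K in the Loewner order. -/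
open Matrix

lemma exists_kappa_aux {d : ℕ} (hd : 0 < d) {P K : Matrix (Fin d) (Fin d) ℝ}
    (hP : P.PosDef) (hK : K.PosDef) :
    ∃ κ : ℝ, 0 < κ ∧ ∀ x : Fin d → ℝ, 2 * κ * (x ⬝ᵥ K *ᵥ x) ≤ x ⬝ᵥ P *ᵥ x := by
  have : Nonempty (Fin d) := Fin.pos_iff_nonempty.mp hd
  set f : (Fin d → ℝ) → ℝ := fun x => x ⬝ᵥ P *ᵥ x with hf
  set g : (Fin d → ℝ) → ℝ := fun x => x ⬝ᵥ K *ᵥ x with hg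
  have hfc : Continuous f :=
    continuous_id.dotProduct (continuous_const.matrix_mulVec continuous_id)
  have hgc : Continuous g :=
    continuous_id.dotProduct (continuous_const.matrix_mulVec continuous_id)
  have hsphere : IsCompact (Metric.sphere (0 : Fin d → ℝ) 1) := isCompact_sphere 0 1
  have hne : (Metric.sphere (0 : Fin d → ℝ) 1).Nonempty := by
    refine ⟨fun _ => 1, ?_⟩
    rw [mem_sphere_zero_iff_norm]
    rw [pi_norm_const]
    norm_num
  obtain ⟨z, hz, hzmin⟩ := hsphere.exists_isMinOn hne hfc.continuousOn
  obtain ⟨w, hw, hwmax⟩ := hsphere.exists_isMaxOn hne hgc.continuousOn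
  have hmemne : ∀ y : Fin d → ℝ, y ∈ Metric.sphere (0 : Fin d → ℝ) 1 → y ≠ 0 := by
    intro y hy h
    rw [mem_sphere_zero_iff_norm, h, norm_zero] at hy
    norm_num at hy
  have hε : 0 < f z := by simpa [hf] using hP.dotProduct_mulVec_pos (hmemne z hz)
  have hC : 0 < g w := lt_of_lt_of_le (by simpa [hg] using hK.dotProduct_mulVec_pos (hmemne z hz)) (hwmax hz)
  refine ⟨f z / (2 * g w), by positivity, fun x => ?_⟩
  by_cases hx : x = 0
  · simp [hx, hf, hg]
  · have hxn : 0 < ‖x‖ := norm_pos_iff.mpr hx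
    set y : Fin d → ℝ := ‖x‖⁻¹ • x with hy
    have hymem : y ∈ Metric.sphere (0 : Fin d → ℝ) 1 := by
      rw [mem_sphere_zero_iff_norm, hy, norm_smul]
      simp [abs_of_pos hxn, inv_mul_cancel₀ hxn.ne']
    have hfx : f x = ‖x‖ ^ 2 * f y := by
      simp only [hf, hy, Matrix.mulVec_smul, smul_dotProduct, dotProduct_smul, smul_eq_mul]
      field_simp
    have hgx : g x = ‖x‖ ^ 2 * g y := by
      simp only [hg, hy, Matrix.mulVec_smul, smul_dotProduct, dotProduct_smul, smul_eq_mul]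
      field_simp
    have h1 : f z ≤ f y := hzmin hymem
    have h2 : g y ≤ g w := hwmax hymem
    have h3 : 0 ≤ g y := by
      have := hK.posSemidef.dotProduct_mulVec_nonneg y
      simpa [hg] using this
    show 2 * (f z / (2 * g w)) * g x ≤ f x
    rw [hfx, hgx]
    have h4 : 2 * (f z / (2 * g w)) = f z / g w := by
      field_simp
    rw [h4, div_mul_eq_mul_div, div_le_iff₀ hC]
    nlinarith [sq_nonneg ‖x‖, mul_nonneg (sq_nonneg ‖x‖) h3, mul_le_mul_of_nonneg_left h2 (mul_nonneg (sq_nonneg ‖x‖) hε.le), mul_le_mul_of_nonneg_left h1 (mul_nonneg (sq_nonneg ‖x‖) hC.le)]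


/-- Closed-loop Lyapunov inequality: under the Riccati equation for `K` and
positive definiteness of `Q − Iᵀ N⁻¹ I`, the closed-loop generator with feedback
`Θ = −S⁻¹ U` satisfies `(A+BΘ)ᵀK + K(A+BΘ) + (D+FΘ)ᵀK(D+FΘ) ⪯ (β − 2κ)K`
for some `κ > 0`. -/
theorem closed_loop_lyapunov_inequality
    (d m : ℕ) (hd : 0 < d) (hm : 0 < m)
    (A D : Matrix (Fin d) (Fin d) ℝ)
    (B F : Matrix (Fin d) (Fin m) ℝ)
    (Q : Matrix (Fin d) (Fin d) ℝ) (hQ : Q.IsSymm)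
    (N : Matrix (Fin m) (Fin m) ℝ) (hN : N.PosDef)
    (I : Matrix (Fin m) (Fin d) ℝ)
    (β : ℝ)
    (Aβ : Matrix (Fin d) (Fin d) ℝ) (hAβ : Aβ = A - (β / 2) • (1 : Matrix (Fin d) (Fin d) ℝ))
    (K : Matrix (Fin d) (Fin d) ℝ) (hK : K.PosDef)
    (S : Matrix (Fin m) (Fin m) ℝ) (hS : S = N + Fᵀ * K * F)
    (U : Matrix (Fin m) (Fin d) ℝ) (hU : U = I + Bᵀ * K + Fᵀ * K * D)
    (Θ : Matrix (Fin m) (Fin d) ℝ) (hΘ : Θ = -(S⁻¹ * U))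
    (hH1 : (Q - Iᵀ * N⁻¹ * I).PosDef)
    (hRiccati : 0 = Q + K * Aβ + Aβᵀ * K + Dᵀ * K * D - Uᵀ * S⁻¹ * U) :
    ∃ κ : ℝ, 0 < κ ∧
      ((β - 2 * κ) • K
        - ((A + B * Θ)ᵀ * K + K * (A + B * Θ) + (D + F * Θ)ᵀ * K * (D + F * Θ))).PosSemidef := by
  have hKt : Kᵀ = K := by
    rw [← conjTranspose_eq_transpose_of_trivial]; exact hK.1
  have hNt : Nᵀ = N := by
    rw [← conjTranspose_eq_transpose_of_trivial]; exact hN.1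
  have hFKF : (Fᵀ * K * F).PosSemidef := by
    have := hK.posSemidef.conjTranspose_mul_mul_same F
    rwa [conjTranspose_eq_transpose_of_trivial] at this
  have hSpd : S.PosDef := by rw [hS]; exact hN.add_posSemidef hFKF
  have hSt : Sᵀ = S := by
    rw [← conjTranspose_eq_transpose_of_trivial]; exact hSpd.1
  have hSdet : IsUnit S.det := hSpd.det_pos.ne'.isUnit
  have hNdet : IsUnit N.det := hN.det_pos.ne'.isUnit
  have hSinvS : S⁻¹ * S = 1 := nonsing_inv_mul S hSdet
  have hSSinv : S * S⁻¹ = 1 := mul_nonsing_inv S hSdet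
  have hSinvT : (S⁻¹)ᵀ = S⁻¹ := by rw [transpose_nonsing_inv, hSt]
  have hNinvT : (N⁻¹)ᵀ = N⁻¹ := by rw [transpose_nonsing_inv, hNt]
  have eN1 : ∀ X : Matrix (Fin m) (Fin d) ℝ, N⁻¹ * (N * X) = X := by
    intro X; rw [← Matrix.mul_assoc, nonsing_inv_mul N hNdet, Matrix.one_mul]
  have eN2 : ∀ X : Matrix (Fin m) (Fin d) ℝ, N * (N⁻¹ * X) = X := by
    intro X; rw [← Matrix.mul_assoc, mul_nonsing_inv N hNdet, Matrix.one_mul]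
  have eS1 : ∀ X : Matrix (Fin m) (Fin d) ℝ, S⁻¹ * (S * X) = X := by
    intro X; rw [← Matrix.mul_assoc, hSinvS, Matrix.one_mul]
  have eSF : ∀ X : Matrix (Fin m) (Fin d) ℝ,
      S⁻¹ * (Fᵀ * (K * (F * X))) = X - S⁻¹ * (N * X) := by
    intro X
    have h2 : Fᵀ * K * F = S - N := by rw [hS]; abel
    calc S⁻¹ * (Fᵀ * (K * (F * X))) = S⁻¹ * ((Fᵀ * K * F) * X) := by
          rw [Matrix.mul_assoc, Matrix.mul_assoc]
      _ = S⁻¹ * (S * X) - S⁻¹ * (N * X) := by rw [h2, Matrix.sub_mul, Matrix.mul_sub]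
      _ = X - S⁻¹ * (N * X) := by rw [eS1]
  -- Riccati rearranged
  have hQK : β • K = Q + K * A + Aᵀ * K + Dᵀ * K * D - Uᵀ * S⁻¹ * U := by
    have h := hRiccati
    rw [hAβ] at h
    rw [← sub_eq_zero]
    have : β • K - (Q + K * A + Aᵀ * K + Dᵀ * K * D - Uᵀ * S⁻¹ * U)
        = -(Q + K * (A - (β / 2) • 1) + (A - (β / 2) • 1)ᵀ * K + Dᵀ * K * D
            - Uᵀ * S⁻¹ * U) := by
      simp only [transpose_sub, transpose_smul, transpose_one, Matrix.mul_sub,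
        Matrix.sub_mul, Matrix.mul_smul, Matrix.smul_mul, Matrix.mul_one, Matrix.one_mul]
      match_scalars <;> ring
    rw [this, ← h, neg_zero]
  set W : Matrix (Fin m) (Fin d) ℝ := I - N * (S⁻¹ * U) with hW
  have hWpsd : (Wᵀ * N⁻¹ * W).PosSemidef := by
    have := hN.inv.posSemidef.conjTranspose_mul_mul_same W
    rwa [conjTranspose_eq_transpose_of_trivial] at this
  have hPpd : ((Q - Iᵀ * N⁻¹ * I) + Wᵀ * N⁻¹ * W).PosDef := hH1.add_posSemidef hWpsd
  have hI : I = U - Bᵀ * K - Fᵀ * K * D := by rw [hU]; abel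
  have hkey : ∀ κ : ℝ, (β - 2 * κ) • K
      - ((A + B * Θ)ᵀ * K + K * (A + B * Θ) + (D + F * Θ)ᵀ * K * (D + F * Θ))
      = ((Q - Iᵀ * N⁻¹ * I) + Wᵀ * N⁻¹ * W) - (2 * κ) • K := by
    intro κ
    rw [sub_smul, hQK, hΘ, hW, hI]
    simp only [transpose_mul, transpose_add, transpose_sub, transpose_neg, transpose_transpose,
      hKt, hNt, hSinvT, hNinvT, Matrix.mul_add, Matrix.add_mul, Matrix.mul_sub, Matrix.sub_mul,
      Matrix.mul_neg, Matrix.neg_mul, neg_neg, neg_sub, Matrix.mul_assoc, eN1, eN2, eS1, eSF]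
    abel
  obtain ⟨κ, hκ, hb⟩ := exists_kappa_aux hd hPpd hK
  refine ⟨κ, hκ, ?_⟩
  rw [hkey κ]
  refine PosSemidef.of_dotProduct_mulVec_nonneg ?_ ?_
  · refine hPpd.1.sub ?_
    show ((2 * κ) • K)ᴴ = (2 * κ) • K
    rw [conjTranspose_smul, star_trivial, hK.1]
  · intro x
    simp only [star_trivial, Matrix.sub_mulVec, dotProduct_sub, Matrix.smul_mulVec,
      dotProduct_smul, smul_eq_mul]
    have := hb x
    linarith
end

section
/- Let d be a positive integer, let Σ and Σ' be real symmetric positive semidefinite d×d matrices, and let δ ∈ [0, 1). Suppose that (1 − δ)Σ ⪯ Σ' ⪯ (1 + δ)Σ in the Loewner order. Then the positive semidefinite square roots satisfy ‖(Σ')^{1/2} − Σ^{1/2}‖ ≤ δ ‖Σ^{1/2}‖, where ‖·‖ is the spectral (ℓ²-operator) norm. -/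
open Matrix
open scoped Matrix.Norms.L2Operator

/-- The positive semidefinite square root, as defined in Mathlib of December 2024
(`Matrix.PosSemidef.sqrt`, since removed). -/
noncomputable def Matrix.PosSemidef.sqrt {n : Type*} [Fintype n] [DecidableEq n] {𝕜 : Type*}
    [RCLike 𝕜] [PartialOrder 𝕜] {A : Matrix n n 𝕜} (hA : A.PosSemidef) : Matrix n n 𝕜 :=
  hA.1.eigenvectorUnitary.1 * diagonal ((↑) ∘ (√·) ∘ hA.1.eigenvalues) *
    (star hA.1.eigenvectorUnitary : Matrix n n 𝕜)

section AuxSqrtStability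

set_option linter.unusedSectionVars false
set_option linter.unusedVariables false

variable {n : Type*} [Fintype n] [DecidableEq n]


lemma psd_smul {A : Matrix n n ℝ} (hA : A.PosSemidef) {c : ℝ} (hc : 0 ≤ c) :
    (c • A).PosSemidef := by
  refine .of_dotProduct_mulVec_nonneg ?_ fun x => ?_
  · unfold Matrix.IsHermitian
    rw [conjTranspose_smul, hA.1]
    simp
  · have := hA.dotProduct_mulVec_nonneg x
    rw [smul_mulVec, dotProduct_smul, smul_eq_mul]
    exact mul_nonneg hc this

lemma dot_sym {B : Matrix n n ℝ} (hB : B.IsHermitian) (x y : n → ℝ) :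
    x ⬝ᵥ (B *ᵥ y) = (B *ᵥ x) ⬝ᵥ y := by
  have hBt : Bᵀ = B := by rw [← conjTranspose_eq_transpose_of_trivial, hB]
  rw [dotProduct_mulVec, ← mulVec_transpose, hBt]

lemma basis_dot_one {M : Matrix n n ℝ} (hM : M.IsHermitian) (i : n) :
    (⇑(hM.eigenvectorBasis i) : n → ℝ) ⬝ᵥ ⇑(hM.eigenvectorBasis i) = 1 := by
  have h1 : ‖hM.eigenvectorBasis i‖ = 1 := hM.eigenvectorBasis.orthonormal.1 i
  have h2 : (inner ℝ (hM.eigenvectorBasis i) (hM.eigenvectorBasis i) : ℝ) = 1 := by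
    rw [real_inner_self_eq_norm_sq, h1]; norm_num
  rw [EuclideanSpace.inner_eq_star_dotProduct, star_trivial] at h2
  exact h2

lemma sqrt_mono_aux {A B : Matrix n n ℝ} (hA : A.PosSemidef) (hB : B.PosSemidef)
    (h : (B * B - A * A).PosSemidef) : (B - A).PosSemidef := by
  have hM : (B - A).IsHermitian := hB.1.sub hA.1
  apply hM.posSemidef_iff_eigenvalues_nonneg.2
  intro i
  by_contra hneg
  push_neg at hneg
  set lam := hM.eigenvalues i with hlam
  set v : n → ℝ := ⇑(hM.eigenvectorBasis i) with hv
  have heig : (B - A) *ᵥ v = lam • v := hM.mulVec_eigenvectorBasis i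
  have hAv : A *ᵥ v = B *ᵥ v - lam • v := by
    rw [sub_mulVec] at heig
    rw [← heig]; abel
  have hvv : v ⬝ᵥ v = 1 := basis_dot_one hM i
  have h2 := h.dotProduct_mulVec_nonneg v
  rw [star_trivial, sub_mulVec, dotProduct_sub, ← mulVec_mulVec, ← mulVec_mulVec,
    dot_sym hB.1, dot_sym hA.1, hAv] at h2
  have hBv := hB.dotProduct_mulVec_nonneg v
  rw [star_trivial] at hBv
  have hexp : (B *ᵥ v - lam • v) ⬝ᵥ (B *ᵥ v - lam • v)
      = B *ᵥ v ⬝ᵥ (B *ᵥ v) - 2 * lam * (v ⬝ᵥ (B *ᵥ v)) + lam ^ 2 * (v ⬝ᵥ v) := by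
    simp only [sub_dotProduct, dotProduct_sub, smul_dotProduct, dotProduct_smul, smul_eq_mul,
      dotProduct_comm (B *ᵥ v) v]
    ring
  rw [hexp, hvv] at h2
  have hneg' : lam < 0 := hneg
  nlinarith [hBv, hneg', h2, mul_nonneg hBv (neg_nonneg.2 hneg'.le),
    mul_pos (neg_pos.2 hneg') (neg_pos.2 hneg')]

lemma herm_norm_le {M : Matrix n n ℝ} (hM : M.IsHermitian)
    {c : ℝ} (hc : 0 ≤ c) (h : ∀ i, |hM.eigenvalues i| ≤ c) : ‖M‖ ≤ c := by
  rw [Matrix.l2_opNorm_def]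
  refine ContinuousLinearMap.opNorm_le_bound _ hc fun x => ?_
  set b := hM.eigenvectorBasis with hb
  set T := (toEuclideanLin (𝕜 := ℝ) (m := n) (n := n)).trans LinearMap.toContinuousLinearMap M with hT
  have hTb : ∀ j, T (b j) = hM.eigenvalues j • b j := by
    intro j
    have := hM.mulVec_eigenvectorBasis j
    apply PiLp.ext
    intro k
    have hk := congrFun this k
    simpa [hT, toEuclideanLin_apply] using hk
  have hsym : (toEuclideanLin (𝕜 := ℝ) (m := n) (n := n) M).IsSymmetric :=
    isSymmetric_toEuclideanLin_iff.2 hM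
  have hrepr : ∀ j, b.repr (T x) j = hM.eigenvalues j * b.repr x j := by
    intro j
    rw [b.repr_apply_apply, b.repr_apply_apply]
    have : (inner ℝ (b j) (T x) : ℝ) = inner ℝ (T (b j)) x := (hsym (b j) x).symm
    rw [this, hTb j, real_inner_smul_left]
  have h1 : ‖T x‖ = ‖b.repr (T x)‖ := (b.repr.norm_map (T x)).symm
  have h2 : ‖x‖ = ‖b.repr x‖ := (b.repr.norm_map x).symm
  rw [h1, h2, EuclideanSpace.norm_eq, EuclideanSpace.norm_eq]
  have hcs : c * Real.sqrt (∑ j, ‖b.repr x j‖ ^ 2)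
      = Real.sqrt (∑ j, c ^ 2 * ‖b.repr x j‖ ^ 2) := by
    rw [← Finset.mul_sum, Real.sqrt_mul (sq_nonneg c), Real.sqrt_sq hc]
  rw [hcs]
  apply Real.sqrt_le_sqrt
  apply Finset.sum_le_sum
  intro j _
  rw [hrepr j, Real.norm_eq_abs, Real.norm_eq_abs]
  have := h j
  have h0 : |hM.eigenvalues j * b.repr x j| = |hM.eigenvalues j| * |b.repr x j| := abs_mul _ _
  rw [h0, mul_pow]
  have : |hM.eigenvalues j| ^ 2 ≤ c ^ 2 := by nlinarith [abs_nonneg (hM.eigenvalues j)]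
  nlinarith [sq_nonneg (|b.repr x j|), sq_abs (b.repr x j), abs_nonneg (b.repr x j)]

lemma eig_abs_le {M A : Matrix n n ℝ} (hM : M.IsHermitian) (hA : A.PosSemidef)
    {c : ℝ} (hc : 0 ≤ c) (h1 : (c • A - M).PosSemidef) (h2 : (c • A + M).PosSemidef)
    (i : n) : |hM.eigenvalues i| ≤ c * ‖A‖ := by
  set v : n → ℝ := ⇑(hM.eigenvectorBasis i) with hv
  have hlam : hM.eigenvalues i = v ⬝ᵥ (M *ᵥ v) := by
    simpa using hM.eigenvalues_eq i
  set q : ℝ := v ⬝ᵥ (A *ᵥ v) with hq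
  have hb1 := h1.dotProduct_mulVec_nonneg v
  rw [star_trivial, sub_mulVec, dotProduct_sub, smul_mulVec, dotProduct_smul,
    smul_eq_mul, ← hlam, ← hq] at hb1
  have hb2 := h2.dotProduct_mulVec_nonneg v
  rw [star_trivial, add_mulVec, dotProduct_add, smul_mulVec, dotProduct_smul,
    smul_eq_mul, ← hlam, ← hq] at hb2
  have hqA : q ≤ ‖A‖ := by
    have hnv : ‖hM.eigenvectorBasis i‖ = 1 := hM.eigenvectorBasis.orthonormal.1 i
    have hinner : q = (inner ℝ (hM.eigenvectorBasis i)
        ((EuclideanSpace.equiv n ℝ).symm (A *ᵥ v)) : ℝ) := by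
      simp only [hq, PiLp.inner_apply, RCLike.inner_apply, dotProduct, starRingEnd_apply]
      exact Finset.sum_congr rfl fun j _ => mul_comm _ _
    have habs := abs_real_inner_le_norm (hM.eigenvectorBasis i)
        ((EuclideanSpace.equiv n ℝ).symm (A *ᵥ v))
    have hmv := Matrix.l2_opNorm_mulVec A (hM.eigenvectorBasis i)
    rw [hnv] at habs hmv
    calc q ≤ |q| := le_abs_self q
    _ ≤ 1 * ‖(EuclideanSpace.equiv n ℝ).symm (A *ᵥ v)‖ := by rw [hinner]; exact habs
    _ ≤ 1 * (‖A‖ * 1) := by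
        rw [one_mul, one_mul]
        exact hmv
    _ = ‖A‖ := by ring
  have : |hM.eigenvalues i| ≤ c * q := abs_le.2 ⟨by linarith, by linarith⟩
  calc |hM.eigenvalues i| ≤ c * q := this
  _ ≤ c * ‖A‖ := mul_le_mul_of_nonneg_left hqA hc


theorem Matrix.PosSemidef.posSemidef_sqrt {A : Matrix n n ℝ} (hA : A.PosSemidef) :
    hA.sqrt.PosSemidef := by
  unfold Matrix.PosSemidef.sqrt
  have hU : (star hA.1.eigenvectorUnitary : Matrix n n ℝ)
      = (hA.1.eigenvectorUnitary.1 : Matrix n n ℝ)ᴴ := rfl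
  rw [hU]
  apply PosSemidef.mul_mul_conjTranspose_same
  rw [posSemidef_diagonal_iff]
  intro i
  simp [Real.sqrt_nonneg]

theorem Matrix.PosSemidef.sqrt_mul_self {A : Matrix n n ℝ} (hA : A.PosSemidef) :
    hA.sqrt * hA.sqrt = A := by
  unfold Matrix.PosSemidef.sqrt
  conv_rhs => rw [hA.1.spectral_theorem]
  rw [Unitary.conjStarAlgAut_apply]
  have hUU : (star hA.1.eigenvectorUnitary : Matrix n n ℝ) * (hA.1.eigenvectorUnitary.1) = 1 :=
    Unitary.coe_star_mul_self _
  rw [show ∀ U D V : Matrix n n ℝ, U * D * V * (U * D * V) = U * (D * (V * U) * D) * V by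
    intro U D V; simp only [mul_assoc]]
  rw [hUU, mul_one, diagonal_mul_diagonal]
  congr 3
  funext i
  simp [Real.mul_self_sqrt (hA.eigenvalues_nonneg i)]

end AuxSqrtStability

/-- Spectral-norm stability of the positive semidefinite square root under a
Loewner sandwich: if `(1−δ)Σ ⪯ Σ' ⪯ (1+δ)Σ` with `δ ∈ [0,1)`, then
`‖(Σ')^{1/2} − Σ^{1/2}‖ ≤ δ ‖Σ^{1/2}‖` in the ℓ²-operator norm. -/
theorem sqrt_spectral_norm_stability
    (d : ℕ) (hd : 0 < d)
    (Sig1 Sig2 : Matrix (Fin d) (Fin d) ℝ)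
    (hSig1 : Sig1.PosSemidef) (hSig2 : Sig2.PosSemidef)
    (δ : ℝ) (hδ0 : 0 ≤ δ) (hδ1 : δ < 1)
    (hlow : (Sig2 - (1 - δ) • Sig1).PosSemidef)
    (hhigh : ((1 + δ) • Sig1 - Sig2).PosSemidef) :
    ‖hSig2.sqrt - hSig1.sqrt‖ ≤ δ * ‖hSig1.sqrt‖ := by
  set A := hSig1.sqrt with hA
  set B := hSig2.sqrt with hB
  have hAp : A.PosSemidef := hSig1.posSemidef_sqrt
  have hBp : B.PosSemidef := hSig2.posSemidef_sqrt
  have hAA : A * A = Sig1 := hSig1.sqrt_mul_self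
  have hBB : B * B = Sig2 := hSig2.sqrt_mul_self
  set s1 := Real.sqrt (1 + δ) with hs1
  set s2 := Real.sqrt (1 - δ) with hs2
  have hs1n : 0 ≤ s1 := Real.sqrt_nonneg _
  have hs2n : 0 ≤ s2 := Real.sqrt_nonneg _
  have hs1sq : s1 * s1 = 1 + δ := Real.mul_self_sqrt (by linarith)
  have hs2sq : s2 * s2 = 1 - δ := Real.mul_self_sqrt (by linarith)
  have hs1le : s1 ≤ 1 + δ := by nlinarith [sq_nonneg (s1 - 1)]
  have hs2ge : 1 - δ ≤ s2 := by nlinarith [sq_nonneg (s2 - 1)]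
  have hC1p : (s1 • A).PosSemidef := psd_smul hAp hs1n
  have hC2p : (s2 • A).PosSemidef := psd_smul hAp hs2n
  have hC1sq : (s1 • A) * (s1 • A) = (1 + δ) • Sig1 := by
    rw [smul_mul_smul_comm, hAA, hs1sq]
  have hC2sq : (s2 • A) * (s2 • A) = (1 - δ) • Sig1 := by
    rw [smul_mul_smul_comm, hAA, hs2sq]
  have hBC1 : (s1 • A - B).PosSemidef := by
    apply sqrt_mono_aux hBp hC1p
    rw [hC1sq, hBB]
    exact hhigh
  have hC2B : (B - s2 • A).PosSemidef := by
    apply sqrt_mono_aux hC2p hBp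
    rw [hC2sq, hBB]
    exact hlow
  have h1 : (δ • A - (B - A)).PosSemidef := by
    have hsum := hBC1.add (psd_smul hAp (by linarith : (0:ℝ) ≤ 1 + δ - s1))
    have heq : (s1 • A - B) + (1 + δ - s1) • A = δ • A - (B - A) := by module
    rwa [heq] at hsum
  have h2 : (δ • A + (B - A)).PosSemidef := by
    have hsum := hC2B.add (psd_smul hAp (by linarith : (0:ℝ) ≤ δ - 1 + s2))
    have heq : (B - s2 • A) + (δ - 1 + s2) • A = δ • A + (B - A) := by module
    rwa [heq] at hsum
  have hM : (B - A).IsHermitian := hBp.1.sub hAp.1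
  apply herm_norm_le hM (mul_nonneg hδ0 (norm_nonneg A))
  intro i
  exact eig_abs_le hM hAp hδ0 h1 h2 i
end

section
/- Let m be a positive integer, let S be a real symmetric positive definite m×m matrix, λ > 0 and η ∈ ℝ^m, and set g := g_{S,λ,S⁻¹η}, i.e., g(a) = (det S)^{1/2}(πλ)^{−m/2} exp(−(1/λ)(a + S⁻¹η)ᵀ S (a + S⁻¹η)). Let p : ℝ^m → [0,∞) be a measurable probability density with respect to Lebesgue measure (∫ p = 1) such that ∫ ‖a‖² p(a) da < ∞ and ∫ p(a) |log p(a)| da < ∞ (with the convention 0·log 0 = 0). Then ∫_{ℝ^m} (aᵀ S a + 2 aᵀ η + λ log p(a)) p(a) da = −ηᵀ S⁻¹ η − (λ/2)(m·log(πλ) − log det S) + λ ∫_{ℝ^m} p(a) log(p(a)/g(a)) da. -/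
open Matrix MeasureTheory

/-- The Gaussian density `g_{S,λ,v}(a) = (det S)^{1/2} (πλ)^{−m/2}
exp(−(1/λ)(a+v)ᵀ S (a+v))`. -/
noncomputable def gaussDensity {m : ℕ} (S : Matrix (Fin m) (Fin m) ℝ) (lam : ℝ)
    (v : Fin m → ℝ) (a : Fin m → ℝ) : ℝ :=
  Real.sqrt S.det * (Real.pi * lam) ^ (-(m : ℝ) / 2)
    * Real.exp (-(1 / lam) * ((a + v) ⬝ᵥ (S *ᵥ (a + v))))

/-- Kullback–Leibler identity for the entropy-regularized quadratic functional:
`∫ (aᵀSa + 2aᵀη + λ log p(a)) p(a) da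
 = −ηᵀS⁻¹η − (λ/2)(m log(πλ) − log det S) + λ ∫ p log(p/g)`
where `g = g_{S,λ,S⁻¹η}`. (Here `Real.log 0 = 0`, realizing the convention
`0·log 0 = 0` and `p log(p/g) = 0` where `p = 0`.) -/
theorem entropy_regularized_KL_identity
    (m : ℕ) (hm : 0 < m)
    (S : Matrix (Fin m) (Fin m) ℝ) (hS : S.PosDef)
    (lam : ℝ) (hlam : 0 < lam)
    (η : Fin m → ℝ)
    (p : (Fin m → ℝ) → ℝ) (hp_meas : Measurable p) (hp_nonneg : ∀ a, 0 ≤ p a)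
    (hp_prob : ∫ a : Fin m → ℝ, p a = 1)
    (hp_int : Integrable p)
    (hp_mom2 : Integrable (fun a : Fin m → ℝ => (a ⬝ᵥ a) * p a))
    (hp_ent : Integrable (fun a : Fin m → ℝ => p a * |Real.log (p a)|)) :
    ∫ a : Fin m → ℝ,
        (a ⬝ᵥ (S *ᵥ a) + 2 * (a ⬝ᵥ η) + lam * Real.log (p a)) * p a
      = -(η ⬝ᵥ (S⁻¹ *ᵥ η))
        - (lam / 2) * ((m : ℝ) * Real.log (Real.pi * lam) - Real.log S.det)
        + lam * ∫ a : Fin m → ℝ,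
            p a * Real.log (p a / gaussDensity S lam (S⁻¹ *ᵥ η) a) := by
  set v : Fin m → ℝ := S⁻¹ *ᵥ η with hv
  have hSdet : 0 < S.det := hS.det_pos
  have hSunit : IsUnit S.det := isUnit_iff_ne_zero.mpr hSdet.ne'
  have hSv : S *ᵥ v = η := by
    rw [hv, mulVec_mulVec, Matrix.mul_nonsing_inv S hSunit, one_mulVec]
  have hpilam : 0 < Real.pi * lam := mul_pos Real.pi_pos hlam
  set c : ℝ := (1 / 2) * Real.log S.det - ((m : ℝ) / 2) * Real.log (Real.pi * lam) with hc
  -- positivity of the Gaussian density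
  have hg : ∀ a, 0 < gaussDensity S lam v a := by
    intro a
    unfold gaussDensity
    positivity
  have hlogg : ∀ a, Real.log (gaussDensity S lam v a)
      = c - (1 / lam) * ((a + v) ⬝ᵥ (S *ᵥ (a + v))) := by
    intro a
    unfold gaussDensity
    rw [Real.log_mul (by positivity) (Real.exp_ne_zero _),
      Real.log_mul (by positivity) (by positivity), Real.log_exp,
      Real.log_sqrt hSdet.le, Real.log_rpow hpilam, hc]
    ring
  -- expansion of the quadratic form
  have hquad : ∀ a : Fin m → ℝ, (a + v) ⬝ᵥ (S *ᵥ (a + v))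
      = a ⬝ᵥ (S *ᵥ a) + 2 * (a ⬝ᵥ η) + η ⬝ᵥ v := by
    intro a
    have hsym : v ⬝ᵥ (S *ᵥ a) = a ⬝ᵥ η := by
      have hsymS : Sᵀ = S := by
        have h := hS.1.eq
        simpa using h
      rw [Matrix.dotProduct_mulVec, ← Matrix.mulVec_transpose, hsymS, hSv,
        dotProduct_comm]
    rw [mulVec_add, add_dotProduct, dotProduct_add, dotProduct_add, hsym, hSv,
      dotProduct_comm v η]
    ring
  -- integrability lemmas
  have hmono2 : ∀ (i j : Fin m) (a : Fin m → ℝ), |a i * a j| ≤ a ⬝ᵥ a := by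
    intro i j a
    have h1 : a i * a i ≤ a ⬝ᵥ a := by
      unfold dotProduct
      exact Finset.single_le_sum (fun k _ => mul_self_nonneg (a k)) (Finset.mem_univ i)
    have h2 : a j * a j ≤ a ⬝ᵥ a := by
      unfold dotProduct
      exact Finset.single_le_sum (fun k _ => mul_self_nonneg (a k)) (Finset.mem_univ j)
    cases abs_cases (a i * a j) with
    | inl h => nlinarith [h.1]
    | inr h => nlinarith [h.1]
  have hIij : ∀ i j : Fin m, Integrable (fun a : Fin m → ℝ => a i * a j * p a) := by
    intro i j
    refine hp_mom2.mono ?_ ?_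
    · exact (((measurable_pi_apply i).mul (measurable_pi_apply j)).mul
        hp_meas).aestronglyMeasurable
    · filter_upwards with a
      have h0 : 0 ≤ a ⬝ᵥ a := le_trans (abs_nonneg _) (hmono2 i i a)
      rw [Real.norm_eq_abs, Real.norm_eq_abs, abs_mul, abs_of_nonneg (hp_nonneg a),
        abs_of_nonneg (mul_nonneg h0 (hp_nonneg a))]
      exact mul_le_mul_of_nonneg_right (hmono2 i j a) (hp_nonneg a)
  have hIi : ∀ i : Fin m, Integrable (fun a : Fin m → ℝ => a i * p a) := by
    intro i
    refine (hp_int.add hp_mom2).mono ?_ ?_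
    · exact ((measurable_pi_apply i).mul hp_meas).aestronglyMeasurable
    · filter_upwards with a
      have h0 : 0 ≤ a ⬝ᵥ a := le_trans (abs_nonneg _) (hmono2 i i a)
      have h1 : a i * a i ≤ a ⬝ᵥ a := by
        have := hmono2 i i a; rwa [abs_mul_self] at this
      simp only [Pi.add_apply]
      rw [Real.norm_eq_abs, Real.norm_eq_abs, abs_mul,
        abs_of_nonneg (add_nonneg (hp_nonneg a) (mul_nonneg h0 (hp_nonneg a))),
        abs_of_nonneg (hp_nonneg a)]
      have hai : |a i| ≤ 1 + a ⬝ᵥ a := by nlinarith [abs_nonneg (a i), sq_abs (a i)]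
      nlinarith [hp_nonneg a, mul_le_mul_of_nonneg_right hai (hp_nonneg a)]
  have hIA : Integrable (fun a : Fin m → ℝ => (a ⬝ᵥ (S *ᵥ a)) * p a) := by
    have : (fun a : Fin m → ℝ => (a ⬝ᵥ (S *ᵥ a)) * p a)
        = fun a => ∑ i, ∑ j, S i j * (a i * a j * p a) := by
      funext a
      simp only [dotProduct, mulVec, Finset.sum_mul, Finset.mul_sum]
      congr 1; funext i; congr 1; funext j; ring
    rw [this]
    exact integrable_finset_sum _ fun i _ =>
      integrable_finset_sum _ fun j _ => (hIij i j).const_mul _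
  have hIB : Integrable (fun a : Fin m → ℝ => (a ⬝ᵥ η) * p a) := by
    have : (fun a : Fin m → ℝ => (a ⬝ᵥ η) * p a)
        = fun a => ∑ i, η i * (a i * p a) := by
      funext a
      simp only [dotProduct, Finset.sum_mul]
      congr 1; funext i; ring
    rw [this]
    exact integrable_finset_sum _ fun i _ => (hIi i).const_mul _
  have hIL : Integrable (fun a : Fin m → ℝ => p a * Real.log (p a)) := by
    refine hp_ent.mono ?_ ?_
    · exact (hp_meas.mul (Real.measurable_log.comp hp_meas)).aestronglyMeasurable
    · filter_upwards with a
      rw [Real.norm_eq_abs, Real.norm_eq_abs, abs_mul,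
        abs_of_nonneg (mul_nonneg (hp_nonneg a) (abs_nonneg _)),
        abs_of_nonneg (hp_nonneg a)]
  -- pointwise decomposition of the relative entropy integrand
  have hKLfun : ∀ a : Fin m → ℝ, p a * Real.log (p a / gaussDensity S lam v a)
      = p a * Real.log (p a) - c * p a
        + (1 / lam) * ((a ⬝ᵥ (S *ᵥ a)) * p a + 2 * ((a ⬝ᵥ η) * p a) + (η ⬝ᵥ v) * p a) := by
    intro a
    by_cases hpa : p a = 0
    · simp [hpa]
    · rw [Real.log_div hpa (hg a).ne', hlogg a, hquad a]
      ring
  have hIB2 : Integrable (fun a : Fin m → ℝ => 2 * ((a ⬝ᵥ η) * p a)) :=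
    hIB.const_mul 2
  have hI12 : Integrable (fun a : Fin m → ℝ =>
      (a ⬝ᵥ (S *ᵥ a)) * p a + 2 * ((a ⬝ᵥ η) * p a)) := hIA.add hIB2
  have hIconst : Integrable (fun a : Fin m → ℝ => (η ⬝ᵥ v) * p a) :=
    hp_int.const_mul _
  have hIcp : Integrable (fun a : Fin m → ℝ => c * p a) := hp_int.const_mul c
  have hILlam : Integrable (fun a : Fin m → ℝ => lam * (p a * Real.log (p a))) :=
    hIL.const_mul lam
  have hKL : ∫ a : Fin m → ℝ, p a * Real.log (p a / gaussDensity S lam v a)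
      = (∫ a : Fin m → ℝ, p a * Real.log (p a)) - c
        + (1 / lam) * ((∫ a : Fin m → ℝ, (a ⬝ᵥ (S *ᵥ a)) * p a)
            + 2 * (∫ a : Fin m → ℝ, (a ⬝ᵥ η) * p a) + η ⬝ᵥ v) := by
    have h1 : Integrable (fun a : Fin m → ℝ =>
        (a ⬝ᵥ (S *ᵥ a)) * p a + 2 * ((a ⬝ᵥ η) * p a) + (η ⬝ᵥ v) * p a) :=
      hI12.add hIconst
    calc ∫ a : Fin m → ℝ, p a * Real.log (p a / gaussDensity S lam v a)
        = ∫ a : Fin m → ℝ, (p a * Real.log (p a) - c * p a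
            + (1 / lam) * ((a ⬝ᵥ (S *ᵥ a)) * p a + 2 * ((a ⬝ᵥ η) * p a)
              + (η ⬝ᵥ v) * p a)) := by
          exact integral_congr_ae (Filter.Eventually.of_forall hKLfun)
      _ = (∫ a : Fin m → ℝ, (p a * Real.log (p a) - c * p a))
            + ∫ a : Fin m → ℝ, (1 / lam) * ((a ⬝ᵥ (S *ᵥ a)) * p a
              + 2 * ((a ⬝ᵥ η) * p a) + (η ⬝ᵥ v) * p a) :=
          integral_add (hIL.sub hIcp) (h1.const_mul _)
      _ = (∫ a : Fin m → ℝ, p a * Real.log (p a)) - c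
            + (1 / lam) * ((∫ a : Fin m → ℝ, (a ⬝ᵥ (S *ᵥ a)) * p a)
              + 2 * (∫ a : Fin m → ℝ, (a ⬝ᵥ η) * p a) + η ⬝ᵥ v) := by
          rw [integral_sub hIL hIcp, integral_const_mul,
            integral_const_mul, integral_add hI12 hIconst,
            integral_add hIA hIB2,
            integral_const_mul, integral_const_mul, hp_prob]
          ring
  -- the left-hand side
  have hLHS : ∫ a : Fin m → ℝ,
      (a ⬝ᵥ (S *ᵥ a) + 2 * (a ⬝ᵥ η) + lam * Real.log (p a)) * p a
      = (∫ a : Fin m → ℝ, (a ⬝ᵥ (S *ᵥ a)) * p a)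
        + 2 * (∫ a : Fin m → ℝ, (a ⬝ᵥ η) * p a)
        + lam * ∫ a : Fin m → ℝ, p a * Real.log (p a) := by
    have : (fun a : Fin m → ℝ =>
        (a ⬝ᵥ (S *ᵥ a) + 2 * (a ⬝ᵥ η) + lam * Real.log (p a)) * p a)
        = fun a => (a ⬝ᵥ (S *ᵥ a)) * p a + 2 * ((a ⬝ᵥ η) * p a)
            + lam * (p a * Real.log (p a)) := by
      funext a; ring
    rw [this, integral_add hI12 hILlam,
      integral_add hIA hIB2, integral_const_mul, integral_const_mul]
  rw [hLHS, hKL]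
  field_simp
  rw [hc, mul_comm lam Real.pi]
  ring
end

section
/- Let m be a positive integer, let S be a real symmetric positive definite m×m matrix, λ > 0 and η ∈ ℝ^m, and set g := g_{S,λ,S⁻¹η}. Let p : ℝ^m → [0,∞) be a measurable probability density with respect to Lebesgue measure such that ∫ ‖a‖² p(a) da < ∞ and ∫ p(a) |log p(a)| da < ∞ (with 0·log 0 = 0). Then ∫_{ℝ^m} (aᵀ S a + 2 aᵀ η + λ log p(a)) p(a) da ≥ −ηᵀ S⁻¹ η − (λ/2)(m·log(πλ) − log det S), with equality if and only if p = g Lebesgue-almost everywhere. In particular, the unique minimizer (up to almost-everywhere equality) of this entropy-regularized quadratic functional over such densities is the Gaussian density g. -/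
open Matrix MeasureTheory
open Real

set_option maxHeartbeats 1000000

lemma aux_mul_log (t : ℝ) (ht : 0 < t) : 0 ≤ t * Real.log t - t + 1 := by
  have h := Real.log_le_sub_one_of_pos (inv_pos.mpr ht)
  rw [Real.log_inv] at h
  have h2 := mul_le_mul_of_nonneg_left h ht.le
  have h3 : t * t⁻¹ = 1 := mul_inv_cancel₀ ht.ne'
  nlinarith

lemma aux_mul_log_strict (t : ℝ) (ht : 0 < t) (ht1 : t ≠ 1) :
    0 < t * Real.log t - t + 1 := by
  have h := Real.log_lt_sub_one_of_pos (inv_pos.mpr ht) (by simpa using ht1)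
  rw [Real.log_inv] at h
  have h2 := mul_lt_mul_of_pos_left h ht
  have h3 : t * t⁻¹ = 1 := mul_inv_cancel₀ ht.ne'
  nlinarith

lemma gauss_aux (m : ℕ) (S : Matrix (Fin m) (Fin m) ℝ) (hS : S.PosDef)
    (c : ℝ) (hc : 0 < c) :
    Integrable (fun x : Fin m → ℝ => Real.exp (-c * (x ⬝ᵥ S *ᵥ x))) ∧
    ∫ x : Fin m → ℝ, Real.exp (-c * (x ⬝ᵥ S *ᵥ x))
      = (Real.sqrt (π / c)) ^ m / Real.sqrt S.det := by
  classical
  obtain ⟨A, hAherm, hAA⟩ : ∃ A : Matrix (Fin m) (Fin m) ℝ, Aᴴ = A ∧ A * A = S :=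
by
    open scoped MatrixOrder in
    exact ⟨CFC.sqrt S, (CFC.sqrt_nonneg S).posSemidef.1,
      CFC.sqrt_mul_sqrt_self S hS.posSemidef.nonneg⟩
  have hAsymm : Aᵀ = A := by
    ext i j
    simpa using congrFun (congrFun hAherm i) j
  have hdet2 : A.det ^ 2 = S.det := by
    rw [← hAA, Matrix.det_mul, sq]
  have hdetS : 0 < S.det := hS.det_pos
  have hdetA : A.det ≠ 0 := by
    intro h; rw [h] at hdet2; simp at hdet2; exact hdetS.ne' hdet2.symm
  have habs : |A.det| = Real.sqrt S.det := by
    rw [← Real.sqrt_sq_eq_abs, hdet2]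
  have hquad : ∀ x : Fin m → ℝ, (A *ᵥ x) ⬝ᵥ (A *ᵥ x) = x ⬝ᵥ S *ᵥ x := by
    intro x
    rw [Matrix.dotProduct_mulVec, ← Matrix.mulVec_transpose, hAsymm,
      Matrix.mulVec_mulVec, hAA, dotProduct_comm]
  have hFprod : ∀ y : Fin m → ℝ, Real.exp (-c * (y ⬝ᵥ y)) = ∏ i, Real.exp (-c * (y i) ^ 2) := by
    intro y
    rw [← Real.exp_sum]
    congr 1
    rw [dotProduct, Finset.mul_sum]
    exact Finset.sum_congr rfl fun i _ => by ring
  have hFint : Integrable (fun y : Fin m → ℝ => Real.exp (-c * (y ⬝ᵥ y))) := by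
    have := MeasureTheory.Integrable.fintype_prod (ι := Fin m)
      (f := fun _ t => Real.exp (-c * t ^ 2)) (fun i => integrable_exp_neg_mul_sq hc)
    exact this.congr (by filter_upwards with y using (hFprod y).symm)
  have hFval : ∫ y : Fin m → ℝ, Real.exp (-c * (y ⬝ᵥ y)) = (Real.sqrt (π / c)) ^ m := by
    rw [show (∫ y : Fin m → ℝ, Real.exp (-c * (y ⬝ᵥ y))) = ∫ y : Fin m → ℝ, ∏ i, Real.exp (-c * (y i) ^ 2) from
      integral_congr_ae (by filter_upwards with y using hFprod y)]
    rw [MeasureTheory.volume_pi, MeasureTheory.integral_fintype_prod_eq_pow (𝕜 := ℝ) (ι := Fin m)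
      (fun t => Real.exp (-c * t ^ 2)), integral_gaussian]
    simp
  have hmap : Measure.map (Matrix.toLin' A) volume
      = ENNReal.ofReal (|A.det|⁻¹) • volume := by
    have h := Real.map_matrix_volume_pi_eq_smul_volume_pi hdetA
    rwa [abs_inv] at h
  have hTmeas : Measurable (Matrix.toLin' A) :=
    (LinearMap.continuous_on_pi _).measurable
  have hFmapmeas : AEStronglyMeasurable (fun y : Fin m → ℝ => Real.exp (-c * (y ⬝ᵥ y)))
      (Measure.map (Matrix.toLin' A) volume) := by
    rw [hmap]
    exact hFint.aestronglyMeasurable.smul_measure _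
  have hSform : (fun x : Fin m → ℝ => Real.exp (-c * (x ⬝ᵥ S *ᵥ x)))
      = (fun y : Fin m → ℝ => Real.exp (-c * (y ⬝ᵥ y))) ∘ (Matrix.toLin' A) := by
    funext x
    simp only [Function.comp_apply, Matrix.toLin'_apply, hquad]
  have hcomp_int : Integrable
      ((fun y : Fin m → ℝ => Real.exp (-c * (y ⬝ᵥ y))) ∘ (Matrix.toLin' A)) := by
    rw [← integrable_map_measure hFmapmeas hTmeas.aemeasurable, hmap]
    exact hFint.smul_measure ENNReal.ofReal_ne_top
  have hcomp_val : ∫ x : Fin m → ℝ,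
        ((fun y : Fin m → ℝ => Real.exp (-c * (y ⬝ᵥ y))) ∘ (Matrix.toLin' A)) x
      = |A.det|⁻¹ * ∫ y : Fin m → ℝ, Real.exp (-c * (y ⬝ᵥ y)) := by
    rw [show (∫ x : Fin m → ℝ,
        ((fun y : Fin m → ℝ => Real.exp (-c * (y ⬝ᵥ y))) ∘ (Matrix.toLin' A)) x)
        = ∫ y : Fin m → ℝ, Real.exp (-c * (y ⬝ᵥ y))
            ∂(Measure.map (Matrix.toLin' A) volume) from
      (integral_map hTmeas.aemeasurable hFmapmeas).symm]
    rw [hmap, integral_smul_measure, ENNReal.toReal_ofReal (by positivity), smul_eq_mul]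
  rw [hSform]
  refine ⟨hcomp_int, ?_⟩
  rw [hcomp_val, hFval, habs, inv_mul_eq_div]

/-- Static entropy minimization: the entropy-regularized quadratic functional
is bounded below by `−ηᵀS⁻¹η − (λ/2)(m log(πλ) − log det S)`, with equality if
and only if `p` equals the Gaussian density `g_{S,λ,S⁻¹η}` almost everywhere. -/
theorem entropy_regularized_min
    (m : ℕ) (hm : 0 < m)
    (S : Matrix (Fin m) (Fin m) ℝ) (hS : S.PosDef)
    (lam : ℝ) (hlam : 0 < lam)
    (η : Fin m → ℝ)
    (p : (Fin m → ℝ) → ℝ) (hp_meas : Measurable p) (hp_nonneg : ∀ a, 0 ≤ p a)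
    (hp_prob : ∫ a : Fin m → ℝ, p a = 1)
    (hp_int : Integrable p)
    (hp_mom2 : Integrable (fun a : Fin m → ℝ => (a ⬝ᵥ a) * p a))
    (hp_ent : Integrable (fun a : Fin m → ℝ => p a * |Real.log (p a)|)) :
    -(η ⬝ᵥ (S⁻¹ *ᵥ η))
        - (lam / 2) * ((m : ℝ) * Real.log (Real.pi * lam) - Real.log S.det)
      ≤ ∫ a : Fin m → ℝ,
          (a ⬝ᵥ (S *ᵥ a) + 2 * (a ⬝ᵥ η) + lam * Real.log (p a)) * p a
    ∧ ((∫ a : Fin m → ℝ,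
          (a ⬝ᵥ (S *ᵥ a) + 2 * (a ⬝ᵥ η) + lam * Real.log (p a)) * p a
        = -(η ⬝ᵥ (S⁻¹ *ᵥ η))
          - (lam / 2) * ((m : ℝ) * Real.log (Real.pi * lam) - Real.log S.det))
        ↔ p =ᵐ[volume] gaussDensity S lam (S⁻¹ *ᵥ η)) := by
  classical
  set v : Fin m → ℝ := S⁻¹ *ᵥ η with hv
  set C0 : ℝ := Real.sqrt S.det * (Real.pi * lam) ^ (-(m : ℝ) / 2) with hC0
  set g : (Fin m → ℝ) → ℝ := gaussDensity S lam v with hgdef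
  have hdetS : 0 < S.det := hS.det_pos
  have hpl : 0 < Real.pi * lam := mul_pos Real.pi_pos hlam
  have hd0 : Real.sqrt S.det ≠ 0 := (Real.sqrt_pos.mpr hdetS).ne'
  have hC0pos : 0 < C0 := mul_pos (Real.sqrt_pos.mpr hdetS) (Real.rpow_pos_of_pos hpl _)
  have hgeq : ∀ a, g a = C0 * Real.exp (-(1 / lam) * ((a + v) ⬝ᵥ S *ᵥ (a + v))) := by
    intro a
    rw [hgdef, hC0]
    rfl
  have hgpos : ∀ a, 0 < g a := fun a => (hgeq a) ▸ mul_pos hC0pos (Real.exp_pos _)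
  -- symmetry facts
  have hsymm : Sᵀ = S := by
    ext i j; simpa using congrFun (congrFun hS.1 i) j
  have hSv : S *ᵥ v = η := by
    rw [hv, Matrix.mulVec_mulVec, Matrix.mul_nonsing_inv _ (isUnit_iff_ne_zero.mpr hdetS.ne'),
      Matrix.one_mulVec]
  have hdot : ∀ a b : Fin m → ℝ, a ⬝ᵥ S *ᵥ b = b ⬝ᵥ S *ᵥ a := by
    intro a b
    rw [Matrix.dotProduct_mulVec, ← Matrix.mulVec_transpose, hsymm, dotProduct_comm]
  have hq : ∀ a : Fin m → ℝ, (a + v) ⬝ᵥ S *ᵥ (a + v)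
      = a ⬝ᵥ S *ᵥ a + 2 * (a ⬝ᵥ η) + η ⬝ᵥ v := by
    intro a
    have h1 : a ⬝ᵥ S *ᵥ v = a ⬝ᵥ η := by rw [hSv]
    have h2 : v ⬝ᵥ S *ᵥ a = a ⬝ᵥ η := by rw [hdot v a, h1]
    have h3 : v ⬝ᵥ S *ᵥ v = η ⬝ᵥ v := by
      rw [hSv, dotProduct_comm]
    rw [Matrix.mulVec_add, dotProduct_add, add_dotProduct,
      add_dotProduct, h1, h2, h3]
    ring
  have hlogg : ∀ a, Real.log (g a)
      = Real.log C0 - (1 / lam) * ((a + v) ⬝ᵥ S *ᵥ (a + v)) := by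
    intro a
    rw [hgeq a, Real.log_mul hC0pos.ne' (Real.exp_ne_zero _), Real.log_exp]
    ring
  -- Gaussian normalization
  have hc : (0:ℝ) < 1 / lam := by positivity
  obtain ⟨hφint, hφval⟩ := gauss_aux m S hS (1 / lam) hc
  have htrans_int : Integrable
      (fun a : Fin m → ℝ => Real.exp (-(1 / lam) * ((a + v) ⬝ᵥ S *ᵥ (a + v)))) :=
    hφint.comp_add_right v
  have hg_int : Integrable g := by
    refine (htrans_int.const_mul C0).congr ?_
    filter_upwards with a using (hgeq a).symm
  have hg_val : ∫ a, g a = 1 := by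
    rw [integral_congr_ae (Filter.Eventually.of_forall hgeq), integral_const_mul,
      integral_add_right_eq_self
        (fun x : Fin m → ℝ => Real.exp (-(1 / lam) * (x ⬝ᵥ S *ᵥ x))) v,
      hφval, show Real.pi / (1 / lam) = Real.pi * lam by field_simp]
    have hs : Real.sqrt (Real.pi * lam) ^ m = (Real.pi * lam) ^ ((m : ℝ) / 2) := by
      rw [Real.sqrt_eq_rpow, ← Real.rpow_natCast ((Real.pi * lam) ^ ((1:ℝ)/2)) m,
        ← Real.rpow_mul hpl.le]
      congr 1; ring
    have hxx : (Real.pi * lam) ^ (-(m : ℝ) / 2) * (Real.pi * lam) ^ ((m : ℝ) / 2) = 1 := by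
      rw [← Real.rpow_add hpl, show -(m:ℝ)/2 + (m:ℝ)/2 = 0 by ring, Real.rpow_zero]
    rw [hs, hC0]
    field_simp
    have hxx' := hxx
    rw [neg_div] at hxx'
    linear_combination hxx'
  have hlogC0 : lam * Real.log C0
      = -(lam / 2) * ((m : ℝ) * Real.log (Real.pi * lam) - Real.log S.det) := by
    rw [hC0, Real.log_mul hd0 (Real.rpow_pos_of_pos hpl _).ne', Real.log_rpow hpl,
      Real.log_sqrt hdetS.le]
    ring
  -- key pointwise identity
  have hkey : ∀ a : Fin m → ℝ,
      (a ⬝ᵥ S *ᵥ a + 2 * (a ⬝ᵥ η) + lam * Real.log (p a)) * p a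
      = lam * (p a * (Real.log (p a) - Real.log (g a)))
        + (lam * Real.log C0 - η ⬝ᵥ v) * p a := by
    intro a
    have e2 : (a + v) ⬝ᵥ S *ᵥ (a + v) = lam * (Real.log C0 - Real.log (g a)) := by
      rw [hlogg a]; field_simp; ring
    have e1 : a ⬝ᵥ S *ᵥ a + 2 * (a ⬝ᵥ η)
        = lam * (Real.log C0 - Real.log (g a)) - η ⬝ᵥ v := by
      rw [← e2, hq a]; ring
    rw [e1]; ring
  -- integrability facts
  have hplogp_int : Integrable (fun a => p a * Real.log (p a)) := by
    refine hp_ent.mono'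
      ((hp_meas.mul (Real.measurable_log.comp hp_meas)).aestronglyMeasurable) ?_
    filter_upwards with a
    rw [Real.norm_eq_abs, abs_mul, abs_of_nonneg (hp_nonneg a)]
  have hself : ∀ a : Fin m → ℝ, ∀ i, a i * a i ≤ a ⬝ᵥ a := by
    intro a i
    exact Finset.single_le_sum (f := fun k => a k * a k)
      (fun k _ => mul_self_nonneg _) (Finset.mem_univ i)
  have habs_pair : ∀ (a : Fin m → ℝ) (i j : Fin m), |a i| * |a j| ≤ a ⬝ᵥ a := by
    intro a i j
    nlinarith [hself a i, hself a j, sq_nonneg (|a i| - |a j|), sq_abs (a i), sq_abs (a j),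
      abs_nonneg (a i), abs_nonneg (a j)]
  have hSa_bound : ∀ a : Fin m → ℝ,
      |a ⬝ᵥ S *ᵥ a| ≤ (∑ i, ∑ j, |S i j|) * (a ⬝ᵥ a) := by
    intro a
    have hrepr : a ⬝ᵥ S *ᵥ a = ∑ i, ∑ j, a i * (S i j * a j) := by
      simp [dotProduct, Matrix.mulVec, Finset.mul_sum]
    rw [hrepr]
    calc |∑ i, ∑ j, a i * (S i j * a j)| ≤ ∑ i, |∑ j, a i * (S i j * a j)| :=
          Finset.abs_sum_le_sum_abs _ _
      _ ≤ ∑ i, ∑ j, |a i * (S i j * a j)| :=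
          Finset.sum_le_sum fun i _ => Finset.abs_sum_le_sum_abs _ _
      _ ≤ ∑ i, ∑ j, |S i j| * (a ⬝ᵥ a) := by
          refine Finset.sum_le_sum fun i _ => Finset.sum_le_sum fun j _ => ?_
          rw [abs_mul, abs_mul]
          calc |a i| * (|S i j| * |a j|) = |S i j| * (|a i| * |a j|) := by ring
            _ ≤ |S i j| * (a ⬝ᵥ a) :=
              mul_le_mul_of_nonneg_left (habs_pair a i j) (abs_nonneg _)
      _ = (∑ i, ∑ j, |S i j|) * (a ⬝ᵥ a) := by
          rw [Finset.sum_mul]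
          exact Finset.sum_congr rfl fun i _ => (Finset.sum_mul _ _ _).symm
  have hmeas_quad : Measurable (fun a : Fin m → ℝ => a ⬝ᵥ S *ᵥ a) := by
    have hrw : (fun a : Fin m → ℝ => a ⬝ᵥ S *ᵥ a)
        = fun a => ∑ i, ∑ j, a i * (S i j * a j) :=
      funext fun a => by simp [dotProduct, Matrix.mulVec, Finset.mul_sum]
    rw [hrw]
    exact Finset.measurable_sum _ fun i _ => Finset.measurable_sum _ fun j _ =>
      (measurable_pi_apply i).mul (measurable_const.mul (measurable_pi_apply j))
  have h1int : Integrable (fun a : Fin m → ℝ => (a ⬝ᵥ S *ᵥ a) * p a) := by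
    refine (hp_mom2.const_mul (∑ i, ∑ j, |S i j|)).mono'
      ((hmeas_quad.mul hp_meas).aestronglyMeasurable) ?_
    filter_upwards with a
    rw [norm_mul, Real.norm_eq_abs, Real.norm_eq_abs, abs_of_nonneg (hp_nonneg a)]
    calc |a ⬝ᵥ S *ᵥ a| * p a ≤ ((∑ i, ∑ j, |S i j|) * (a ⬝ᵥ a)) * p a :=
          mul_le_mul_of_nonneg_right (hSa_bound a) (hp_nonneg a)
      _ = (∑ i, ∑ j, |S i j|) * (a ⬝ᵥ a * p a) := by ring
  have hdotη_bound : ∀ a : Fin m → ℝ, |a ⬝ᵥ η| ≤ (a ⬝ᵥ a + η ⬝ᵥ η) / 2 := by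
    intro a
    calc |a ⬝ᵥ η| ≤ ∑ i, |a i * η i| := Finset.abs_sum_le_sum_abs _ _
      _ ≤ ∑ i, (a i * a i + η i * η i) / 2 := by
          refine Finset.sum_le_sum fun i _ => ?_
          rw [abs_mul]
          nlinarith [sq_nonneg (|a i| - |η i|), sq_abs (a i), sq_abs (η i)]
      _ = (a ⬝ᵥ a + η ⬝ᵥ η) / 2 := by
          rw [← Finset.sum_div, Finset.sum_add_distrib]; rfl
  have hmeas_dotη : Measurable (fun a : Fin m → ℝ => a ⬝ᵥ η) :=
    Finset.measurable_sum _ fun i _ => (measurable_pi_apply i).mul measurable_const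
  have h2int : Integrable (fun a : Fin m → ℝ => (a ⬝ᵥ η) * p a) := by
    refine ((hp_mom2.const_mul (1/2)).add (hp_int.const_mul ((η ⬝ᵥ η) / 2))).mono'
      ((hmeas_dotη.mul hp_meas).aestronglyMeasurable) ?_
    filter_upwards with a
    rw [norm_mul, Real.norm_eq_abs, Real.norm_eq_abs, abs_of_nonneg (hp_nonneg a)]
    calc |a ⬝ᵥ η| * p a ≤ ((a ⬝ᵥ a + η ⬝ᵥ η) / 2) * p a :=
          mul_le_mul_of_nonneg_right (hdotη_bound a) (hp_nonneg a)
      _ = 1/2 * (a ⬝ᵥ a * p a) + (η ⬝ᵥ η) / 2 * p a := by ring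
  have hq_p_int : Integrable (fun a : Fin m → ℝ => ((a + v) ⬝ᵥ S *ᵥ (a + v)) * p a) := by
    have hrw : (fun a : Fin m → ℝ => ((a + v) ⬝ᵥ S *ᵥ (a + v)) * p a)
        = fun a => (a ⬝ᵥ S *ᵥ a) * p a + 2 * ((a ⬝ᵥ η) * p a) + (η ⬝ᵥ v) * p a :=
      funext fun a => by rw [hq a]; ring
    rw [hrw]
    exact (h1int.add (h2int.const_mul 2)).add (hp_int.const_mul _)
  have hplogg_int : Integrable (fun a => p a * Real.log (g a)) := by
    have hrw : (fun a => p a * Real.log (g a))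
        = fun a => (Real.log C0) * p a - (1/lam) * (((a + v) ⬝ᵥ S *ᵥ (a + v)) * p a) :=
      funext fun a => by rw [hlogg a]; ring
    rw [hrw]
    exact (hp_int.const_mul _).sub (hq_p_int.const_mul _)
  have hKL_int : Integrable (fun a => p a * (Real.log (p a) - Real.log (g a))) := by
    have hrw : (fun a => p a * (Real.log (p a) - Real.log (g a)))
        = fun a => p a * Real.log (p a) - p a * Real.log (g a) :=
      funext fun a => by ring
    rw [hrw]
    exact hplogp_int.sub hplogg_int
  -- the KL integrand
  set D : (Fin m → ℝ) → ℝ :=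
    fun a => p a * (Real.log (p a) - Real.log (g a)) - (p a - g a) with hD
  have hD_int : Integrable D := hKL_int.sub (hp_int.sub hg_int)
  have hDall : ∀ a, 0 ≤ D a ∧ (D a = 0 ↔ p a = g a) := by
    intro a
    rcases eq_or_lt_of_le (hp_nonneg a) with h0 | hpa
    · have hDa : D a = g a := by simp [hD, ← h0]
      refine ⟨hDa ▸ (hgpos a).le, ?_⟩
      rw [hDa]
      constructor
      · intro h; exact absurd h (hgpos a).ne'
      · intro h; rw [← h0] at h; exact absurd h.symm (hgpos a).ne'
    · have ht : 0 < p a / g a := div_pos hpa (hgpos a)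
      have hlogt : Real.log (p a) - Real.log (g a) = Real.log (p a / g a) :=
        (Real.log_div hpa.ne' (hgpos a).ne').symm
      have hDa : D a = g a * ((p a / g a) * Real.log (p a / g a) - (p a / g a) + 1) := by
        rw [hD]
        show p a * (Real.log (p a) - Real.log (g a)) - (p a - g a) = _
        rw [hlogt]
        have hgg : g a * (p a / g a) = p a := by
          rw [mul_comm, div_mul_cancel₀ _ (hgpos a).ne']
        rw [show g a * (p a / g a * Real.log (p a / g a) - p a / g a + 1)
            = (g a * (p a / g a)) * Real.log (p a / g a) - g a * (p a / g a) + g a from by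
          ring, hgg]
        ring
      refine ⟨hDa ▸ mul_nonneg (hgpos a).le (aux_mul_log _ ht), ?_⟩
      rw [hDa]
      constructor
      · intro h
        by_contra hne
        have ht1 : p a / g a ≠ 1 := by
          intro h1
          exact hne ((div_eq_one_iff_eq (hgpos a).ne').mp h1)
        exact absurd h (mul_pos (hgpos a) (aux_mul_log_strict _ ht ht1)).ne'
      · intro h
        rw [h, div_self (hgpos a).ne']
        simp
  -- integral computations
  have hpg_int : Integrable (fun a : Fin m → ℝ => p a - g a) := hp_int.sub hg_int
  have hintD : ∫ a, D a = ∫ a, p a * (Real.log (p a) - Real.log (g a)) := by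
    have h1 : ∫ a, D a = (∫ a, p a * (Real.log (p a) - Real.log (g a)))
        - ∫ a, (p a - g a) := integral_sub hKL_int hpg_int
    rw [h1, integral_sub hp_int hg_int, hp_prob, hg_val, sub_self, sub_zero]
  have hKC : lam * Real.log C0 - η ⬝ᵥ v
      = -(η ⬝ᵥ v) - (lam / 2) * ((m : ℝ) * Real.log (Real.pi * lam) - Real.log S.det) := by
    rw [hlogC0]; ring
  have hIval : ∫ a : Fin m → ℝ, (a ⬝ᵥ S *ᵥ a + 2 * (a ⬝ᵥ η) + lam * Real.log (p a)) * p a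
      = lam * (∫ a, D a)
        + (-(η ⬝ᵥ v)
            - (lam / 2) * ((m : ℝ) * Real.log (Real.pi * lam) - Real.log S.det)) := by
    rw [integral_congr_ae (Filter.Eventually.of_forall hkey),
      integral_add (hKL_int.const_mul lam) (hp_int.const_mul _),
      integral_const_mul, integral_const_mul, hp_prob, mul_one, ← hintD, hKC]
  have hDnn : 0 ≤ ∫ a, D a := integral_nonneg fun a => (hDall a).1
  constructor
  · rw [hIval]
    nlinarith [mul_nonneg hlam.le hDnn]
  · rw [hIval]
    constructor
    · intro h
      have h' : lam * ∫ a, D a = 0 := by linarith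
      have hD0 : ∫ a, D a = 0 := (mul_eq_zero.mp h').resolve_left hlam.ne'
      have hDae : D =ᵐ[volume] 0 :=
        (integral_eq_zero_iff_of_nonneg (fun a => (hDall a).1) hD_int).mp hD0
      exact hDae.mono fun a ha => ((hDall a).2).mp ha
    · intro h
      have hDae : D =ᵐ[volume] (0 : (Fin m → ℝ) → ℝ) :=
        h.mono fun a ha => ((hDall a).2).mpr ha
      have hD0 : ∫ a, D a = 0 := by
        rw [integral_congr_ae hDae]
        simp
      rw [hD0]
      ring
end
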